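/- Let a, q ∈ L^∞([0,T]) with a differentiable, a' ∈ L^∞([0,T]), and inf_{t∈[0,T]} a(t) = a₀ > 0. For fixed λ ≥ 0, let û : [0,T] → ℂ solve the ODE ∂_t²û(t) + a(t)λ û(t) + q(t)û(t) = f̂(t) with data û(0) = û₀, ∂_t û(0) = û₁, where f̂ ∈ L²([0,T]). Then with ⟨λ⟩ = (1+λ)^{1/2}, ⟨λ⟩²|û(t)|² + |∂_t û(t)|² ≤ C_T ( ⟨λ⟩²|û₀|² + |û₁|² + ∫₀ᵀ |f̂(τ)|² dτ ) for all t ∈ [0,T], where C_T = c₀⁻¹(1+‖a‖_{L^∞}) exp( c₀⁻¹(1 + ‖a'‖_{L^∞} + ‖q‖_{L^∞} + 2‖a‖_{L^∞}) T ) and c₀ = min{a₀, 1}; in particular the constant C_T is independent of λ. -/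

import Mathlib

open Set intervalIntegral

private lemma hd_normSq (u u' : ℝ → ℂ) (t : ℝ) (h : HasDerivAt u (u' t) t) :
    HasDerivAt (fun s => ‖u s‖^2)
      (2*((u t).re*(u' t).re + (u t).im*(u' t).im)) t := by
  have hre : HasDerivAt (fun s => (u s).re) ((u' t).re) t :=
    (Complex.reCLM.hasFDerivAt.comp_hasDerivAt t h)
  have him : HasDerivAt (fun s => (u s).im) ((u' t).im) t :=
    (Complex.imCLM.hasFDerivAt.comp_hasDerivAt t h)
  have h2 := ((hre.mul hre).add (him.mul him))
  have heq : (fun s => ‖u s‖^2) = (fun s => (u s).re * (u s).re + (u s).im * (u s).im) := by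
    funext s
    rw [← Complex.normSq_apply, ← Complex.sq_norm]
  rw [heq]
  exact h2.congr_deriv (by ring)

private lemma keyineq (c κ Ka Ka' Kq A A' Q lam X V F D Df : ℝ)
    (hc : 0 < c) (hc1 : c ≤ 1) (hlam : 0 ≤ lam) (hcA : c ≤ A) (hAK : A ≤ Ka)
    (hA' : |A'| ≤ Ka') (hQ : |Q| ≤ Kq)
    (hKa : 0 < Ka) (hKa' : 0 ≤ Ka') (hKq : 0 ≤ Kq)
    (hX : 0 ≤ X) (hV : 0 ≤ V) (hF : 0 ≤ F)
    (hD1 : 2*D ≤ X + V) (hD2 : -(X+V) ≤ 2*D) (hDf : 2*Df ≤ V + F)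
    (hκ : κ = c⁻¹ * (1+Ka'+Kq+2*Ka)) :
    A'*((1+lam)*X) + 2*A*D - 2*Q*D + 2*Df ≤ κ*(A*((1+lam)*X)+V) + F := by
  have hApos : 0 < A := lt_of_lt_of_le hc hcA
  have hEnn : 0 ≤ A*((1+lam)*X)+V := by positivity
  have hcE : c * ((1+lam)*X + V) ≤ A*((1+lam)*X)+V := by
    have h1 : c * ((1+lam)*X) ≤ A * ((1+lam)*X) :=
      mul_le_mul_of_nonneg_right hcA (by positivity)
    nlinarith
  have hXVle : (1+lam)*X + V ≤ c⁻¹ * (A*((1+lam)*X)+V) := by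
    have h := mul_le_mul_of_nonneg_left hcE (inv_nonneg.2 hc.le)
    rwa [← mul_assoc, inv_mul_cancel₀ hc.ne', one_mul] at h
  have hlamX : 0 ≤ lam * X := mul_nonneg hlam hX
  set e := c⁻¹ * (A*((1+lam)*X)+V) with hedef
  have henn : 0 ≤ e := by positivity
  have hXV' : X + V ≤ e := by nlinarith
  have hLX : (1+lam)*X ≤ e := by nlinarith
  have hVle : V ≤ e := by nlinarith
  have t1 : A'*((1+lam)*X) ≤ Ka' * e := by
    have h1 : A'*((1+lam)*X) ≤ Ka'*((1+lam)*X) :=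
      mul_le_mul_of_nonneg_right ((le_abs_self _).trans hA') (by positivity)
    exact h1.trans (mul_le_mul_of_nonneg_left hLX hKa')
  have t2 : 2*A*D ≤ Ka * e := by
    have h1 : A * (2*D) ≤ A * (X + V) := mul_le_mul_of_nonneg_left hD1 hApos.le
    have h2 : A * (X+V) ≤ Ka * (X+V) := mul_le_mul_of_nonneg_right hAK (by positivity)
    have h3 : Ka * (X+V) ≤ Ka * e := mul_le_mul_of_nonneg_left hXV' hKa.le
    nlinarith
  have t3 : -(2*Q*D) ≤ Kq * e := by
    have habs : |2*D| ≤ X + V := abs_le.2 ⟨by linarith, hD1⟩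
    have h1 : -(2*Q*D) ≤ |Q| * |2*D| := by
      calc -(2*Q*D) = -(Q*(2*D)) := by ring
        _ ≤ |Q * (2*D)| := neg_le_abs _
        _ = |Q| * |2*D| := abs_mul _ _
    have h2 : |Q| * |2*D| ≤ Kq*(X+V) := mul_le_mul hQ habs (abs_nonneg _) hKq
    have h3 : Kq*(X+V) ≤ Kq*e := mul_le_mul_of_nonneg_left hXV' hKq
    linarith
  have t4 : 2*Df ≤ e + F := by linarith
  have hkE : κ*(A*((1+lam)*X)+V) = Ka'*e + Ka*e + Kq*e + e + c⁻¹*Ka*(A*((1+lam)*X)+V) := by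
    rw [hκ, hedef]; ring
  have hslack : 0 ≤ c⁻¹*Ka*(A*((1+lam)*X)+V) := by positivity
  linarith

set_option maxHeartbeats 400000

/-- Mode-wise energy estimate for
`û'' + a(t)λ û + q(t)û = f̂` on `[0,T]` with `a` differentiable, `a, a', q` bounded
(by `Ka, Ka', Kq`, their `L^∞` norms), `a ≥ a₀ > 0` and `λ ≥ 0`:
`⟨λ⟩²|û(t)|² + |û'(t)|² ≤ C_T(⟨λ⟩²|û(0)|² + |û'(0)|² + ∫₀ᵀ|f̂|²)` with
`C_T = c₀⁻¹(1+Ka)·exp(c₀⁻¹(1+Ka'+Kq+2Ka)T)`, `c₀ = min{a₀,1}`, independent of `λ`. -/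
theorem stmt19 (T : ℝ) (hT : 0 ≤ T) (a a' q : ℝ → ℝ)
    (Ka Ka' Kq a₀ : ℝ) (ha₀ : 0 < a₀)
    (hainf : ∀ t ∈ Icc (0 : ℝ) T, a₀ ≤ a t)
    (haK : ∀ t ∈ Icc (0 : ℝ) T, |a t| ≤ Ka)
    (haK' : ∀ t ∈ Icc (0 : ℝ) T, |a' t| ≤ Ka')
    (hqK : ∀ t ∈ Icc (0 : ℝ) T, |q t| ≤ Kq)
    (hader : ∀ t ∈ Icc (0 : ℝ) T, HasDerivAt a (a' t) t)
    (lam : ℝ) (hlam : 0 ≤ lam)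
    (u u' u'' fhat : ℝ → ℂ)
    (hu' : ∀ t ∈ Icc (0 : ℝ) T, HasDerivAt u (u' t) t)
    (hu'' : ∀ t ∈ Icc (0 : ℝ) T, HasDerivAt u' (u'' t) t)
    (hf : IntervalIntegrable (fun τ => ‖fhat τ‖ ^ 2) MeasureTheory.volume 0 T)
    (hode : ∀ t ∈ Icc (0 : ℝ) T,
      u'' t + ((a t * lam : ℝ) : ℂ) * u t + ((q t : ℝ) : ℂ) * u t = fhat t) :
    ∀ t ∈ Icc (0 : ℝ) T,
      (1 + lam) * ‖u t‖ ^ 2 + ‖u' t‖ ^ 2 ≤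
        ((min a₀ 1)⁻¹ * (1 + Ka) *
            Real.exp ((min a₀ 1)⁻¹ * (1 + Ka' + Kq + 2 * Ka) * T)) *
          ((1 + lam) * ‖u 0‖ ^ 2 + ‖u' 0‖ ^ 2 +
            ∫ τ in (0 : ℝ)..T, ‖fhat τ‖ ^ 2) := by
  have h0mem : (0 : ℝ) ∈ Icc (0 : ℝ) T := ⟨le_refl 0, hT⟩
  set c : ℝ := min a₀ 1 with hcdef
  have hc : 0 < c := lt_min ha₀ one_pos
  have hc1 : c ≤ 1 := min_le_right _ _
  have hKa : 0 < Ka := lt_of_lt_of_le ha₀ ((hainf 0 h0mem).trans ((le_abs_self _).trans (haK 0 h0mem)))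
  have hKa' : 0 ≤ Ka' := (abs_nonneg _).trans (haK' 0 h0mem)
  have hKq : 0 ≤ Kq := (abs_nonneg _).trans (hqK 0 h0mem)
  set κ : ℝ := c⁻¹ * (1 + Ka' + Kq + 2 * Ka) with hκdef
  have hκ : 0 ≤ κ := by positivity
  have hca : ∀ t ∈ Icc (0:ℝ) T, c ≤ a t := fun t ht => le_trans (min_le_left _ _) (hainf t ht)
  clear_value c κ
  set E : ℝ → ℝ := fun t => a t * ((1 + lam) * ‖u t‖^2) + ‖u' t‖^2 with hEdef
  set E' : ℝ → ℝ := fun t =>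
      a' t * ((1 + lam) * ‖u t‖^2)
      + a t * ((1 + lam) * (2*((u t).re*(u' t).re + (u t).im*(u' t).im)))
      + 2*((u' t).re*(u'' t).re + (u' t).im*(u'' t).im) with hE'def
  clear_value E E'
  have hE : ∀ t ∈ Icc (0 : ℝ) T, HasDerivAt E (E' t) t := by
    intro t ht
    rw [hEdef, hE'def]
    have h1 := (hader t ht).mul ((hd_normSq u u' t (hu' t ht)).const_mul (1 + lam))
    have h2 := hd_normSq u' u'' t (hu'' t ht)
    exact h1.add h2
  -- nonnegativity and comparison facts
  have hEnn : ∀ t ∈ Icc (0:ℝ) T, 0 ≤ E t := by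
    intro t ht
    rw [hEdef]
    have ha := (hainf t ht)
    have : 0 ≤ a t := le_trans ha₀.le ha
    positivity
  -- key differential inequality
  have hkey : ∀ t ∈ Icc (0:ℝ) T, E' t ≤ κ * E t + ‖fhat t‖^2 := by
    intro t ht
    have hA : a₀ ≤ a t := hainf t ht
    have hcA : c ≤ a t := hca t ht
    have hAK : a t ≤ Ka := (le_abs_self _).trans (haK t ht)
    have hw : u'' t = fhat t - ((a t * lam : ℝ) : ℂ) * u t - ((q t : ℝ) : ℂ) * u t := by
      have := hode t ht; linear_combination this
    have hwre : (u'' t).re = (fhat t).re - a t * lam * (u t).re - q t * (u t).re := by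
      rw [hw]; simp [Complex.sub_re, Complex.mul_re]
    have hwim : (u'' t).im = (fhat t).im - a t * lam * (u t).im - q t * (u t).im := by
      rw [hw]; simp [Complex.sub_im, Complex.mul_im]
    have hX : ‖u t‖^2 = (u t).re^2 + (u t).im^2 := by
      rw [Complex.sq_norm, Complex.normSq_apply]; ring
    have hV : ‖u' t‖^2 = (u' t).re^2 + (u' t).im^2 := by
      rw [Complex.sq_norm, Complex.normSq_apply]; ring
    have hF : ‖fhat t‖^2 = (fhat t).re^2 + (fhat t).im^2 := by
      rw [Complex.sq_norm, Complex.normSq_apply]; ring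
    have hE'eq : E' t = a' t * ((1+lam)*((u t).re^2 + (u t).im^2))
        + 2 * a t * ((u t).re*(u' t).re + (u t).im*(u' t).im)
        - 2 * q t * ((u t).re*(u' t).re + (u t).im*(u' t).im)
        + 2*((u' t).re*(fhat t).re + (u' t).im*(fhat t).im) := by
      rw [hE'def]; simp only; rw [hX, hwre, hwim]; ring
    have hEeq : E t = a t * ((1+lam) * ((u t).re^2 + (u t).im^2)) + ((u' t).re^2 + (u' t).im^2) := by
      rw [hEdef]; simp only; rw [hX, hV]
    calc E' t = a' t * ((1+lam)*((u t).re^2 + (u t).im^2))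
        + 2 * a t * ((u t).re*(u' t).re + (u t).im*(u' t).im)
        - 2 * q t * ((u t).re*(u' t).re + (u t).im*(u' t).im)
        + 2*((u' t).re*(fhat t).re + (u' t).im*(fhat t).im) := hE'eq
      _ ≤ κ*(a t * ((1+lam) * ((u t).re^2 + (u t).im^2)) + ((u' t).re^2 + (u' t).im^2))
          + ((fhat t).re^2 + (fhat t).im^2) := by
          apply keyineq c κ Ka Ka' Kq (a t) (a' t) (q t) lam _ _ _ _ _
            hc hc1 hlam hcA hAK (haK' t ht) (hqK t ht) hKa hKa' hKq
            (by positivity) (by positivity) (by positivity)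
            (by nlinarith [sq_nonneg ((u t).re - (u' t).re), sq_nonneg ((u t).im - (u' t).im)])
            (by nlinarith [sq_nonneg ((u t).re + (u' t).re), sq_nonneg ((u t).im + (u' t).im)])
            (by nlinarith [sq_nonneg ((u' t).re - (fhat t).re), sq_nonneg ((u' t).im - (fhat t).im)])
            hκdef
      _ = κ * E t + ‖fhat t‖^2 := by rw [hEeq, hF]
  -- Gronwall via exp(-κ t) E t
  set H : ℝ → ℝ := fun t => Real.exp (-κ * t) * E t with hHdef
  clear_value H
  have hH' : ∀ t ∈ Icc (0:ℝ) T,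
      HasDerivAt H (Real.exp (-κ * t) * (E' t - κ * E t)) t := by
    intro t ht
    rw [hHdef]
    have hexp : HasDerivAt (fun s => Real.exp (-κ * s)) (Real.exp (-κ * t) * (-κ)) t := by
      have h1 : HasDerivAt (fun s : ℝ => -κ * s) (-κ) t := by
        simpa using (hasDerivAt_id t).const_mul (-κ)
      exact (Real.hasDerivAt_exp (-κ * t)).comp t h1
    have := hexp.mul (hE t ht)
    exact this.congr_deriv (by ring)
  intro t ht
  -- FTC-type estimate on [0, t]
  have hsub : Icc (0:ℝ) t ⊆ Icc (0:ℝ) T := Icc_subset_Icc le_rfl ht.2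
  have hInt : MeasureTheory.IntegrableOn (fun τ => ‖fhat τ‖ ^ 2) (Icc 0 t)
      MeasureTheory.volume := by
    rw [integrableOn_Icc_iff_integrableOn_Ioc]
    exact (hf.mono_set (by rw [uIcc_of_le ht.1, uIcc_of_le hT]; exact hsub)).1
  have hgron : H t - H 0 ≤ ∫ τ in (0:ℝ)..t, ‖fhat τ‖ ^ 2 := by
    apply sub_le_integral_of_hasDeriv_right_of_le ht.1
    · intro s hs
      exact ((hH' s (hsub hs)).continuousAt).continuousWithinAt
    · intro s hs
      exact (hH' s (hsub (Ioo_subset_Icc_self hs))).hasDerivWithinAt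
    · exact hInt
    · intro s hs
      have hsmem : s ∈ Icc (0:ℝ) T := hsub (Ioo_subset_Icc_self hs)
      have h1 : E' s - κ * E s ≤ ‖fhat s‖^2 := by
        have := hkey s hsmem; linarith
      have hexp1 : Real.exp (-κ * s) ≤ 1 := by
        apply Real.exp_le_one_iff.2
        have : 0 ≤ κ * s := mul_nonneg hκ hs.1.le
        linarith
      have hexppos : 0 < Real.exp (-κ * s) := Real.exp_pos _
      calc Real.exp (-κ * s) * (E' s - κ * E s)
          ≤ Real.exp (-κ * s) * ‖fhat s‖^2 := by
            exact mul_le_mul_of_nonneg_left h1 hexppos.le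
        _ ≤ 1 * ‖fhat s‖^2 := mul_le_mul_of_nonneg_right hexp1 (by positivity)
        _ = ‖fhat s‖^2 := one_mul _
  have hH0 : H 0 = E 0 := by rw [hHdef]; simp
  have hImono : (∫ τ in (0:ℝ)..t, ‖fhat τ‖ ^ 2) ≤ ∫ τ in (0:ℝ)..T, ‖fhat τ‖ ^ 2 := by
    apply integral_mono_interval le_rfl ht.1 ht.2 _ hf
    filter_upwards with x using by positivity
  have hInn : 0 ≤ ∫ τ in (0:ℝ)..T, ‖fhat τ‖ ^ 2 := by
    apply intervalIntegral.integral_nonneg hT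
    intro x _; positivity
  set I := ∫ τ in (0:ℝ)..T, ‖fhat τ‖ ^ 2 with hIdef
  clear_value I
  -- E t ≤ exp(κ t) (E 0 + I)
  have hEt : E t ≤ Real.exp (κ * t) * (E 0 + I) := by
    have h1 : H t ≤ E 0 + I := by
      have := hgron; rw [hH0] at this; linarith [hImono]
    have h2 : E t = Real.exp (κ * t) * H t := by
      rw [hHdef]; simp only
      rw [← mul_assoc, ← Real.exp_add]
      simp
    rw [h2]
    exact mul_le_mul_of_nonneg_left h1 (Real.exp_pos _).le
  have hexpT : Real.exp (κ * t) ≤ Real.exp (κ * T) :=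
    Real.exp_le_exp.2 (mul_le_mul_of_nonneg_left ht.2 hκ)
  -- lower bound: c (LHS) ≤ E t
  have hA : c ≤ a t := hca t ht
  have hlow : c * ((1 + lam) * ‖u t‖ ^ 2 + ‖u' t‖ ^ 2) ≤ E t := by
    rw [hEdef]; simp only
    have h1 : c * ((1+lam) * ‖u t‖^2) ≤ a t * ((1+lam) * ‖u t‖^2) :=
      mul_le_mul_of_nonneg_right hA (by positivity)
    have h2 : c * ‖u' t‖^2 ≤ ‖u' t‖^2 := by
      have := mul_le_mul_of_nonneg_right hc1 (sq_nonneg ‖u' t‖)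
      linarith
    have h3 : c * ((1 + lam) * ‖u t‖ ^ 2 + ‖u' t‖ ^ 2)
        = c * ((1+lam) * ‖u t‖^2) + c * ‖u' t‖^2 := by ring
    linarith
  -- upper bound for E 0
  have hup : E 0 ≤ (1 + Ka) * ((1 + lam) * ‖u 0‖ ^ 2 + ‖u' 0‖ ^ 2) := by
    rw [hEdef]; simp only
    have h1 : a 0 * ((1+lam) * ‖u 0‖^2) ≤ Ka * ((1+lam) * ‖u 0‖^2) :=
      mul_le_mul_of_nonneg_right ((le_abs_self _).trans (haK 0 h0mem)) (by positivity)
    have h2 : (1 + Ka) * ((1 + lam) * ‖u 0‖ ^ 2 + ‖u' 0‖ ^ 2)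
        = Ka * ((1+lam) * ‖u 0‖^2) + ((1+lam) * ‖u 0‖^2 + ‖u' 0‖^2) + Ka * ‖u' 0‖^2 := by
      ring
    have h3 : 0 ≤ (1+lam) * ‖u 0‖^2 := by positivity
    have h4 : 0 ≤ Ka * ‖u' 0‖^2 := mul_nonneg hKa.le (sq_nonneg _)
    linarith
  -- assemble
  set R := (1 + lam) * ‖u 0‖ ^ 2 + ‖u' 0‖ ^ 2 with hRdef
  have hRnn : 0 ≤ R := by rw [hRdef]; positivity
  clear_value R
  have hIle : I ≤ (1 + Ka) * I := by
    have h1 : (1 + Ka) * I = I + Ka * I := by ring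
    linarith [mul_nonneg hKa.le hInn]
  have hE0I : E 0 + I ≤ (1 + Ka) * (R + I) := by
    have hexp : (1 + Ka) * (R + I) = (1 + Ka) * R + (1 + Ka) * I := by ring
    linarith [hup]
  have hEnnt : 0 ≤ E t := hEnn t ht
  have step1 : (1 + lam) * ‖u t‖ ^ 2 + ‖u' t‖ ^ 2 ≤ c⁻¹ * E t := by
    rw [le_inv_mul_iff₀ hc]; linarith
  have step2 : c⁻¹ * E t ≤ c⁻¹ * (Real.exp (κ * t) * (E 0 + I)) :=
    mul_le_mul_of_nonneg_left hEt (by positivity)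
  have hE0Inn : 0 ≤ E 0 + I := by
    have := hEnn 0 h0mem; linarith
  have step3 : Real.exp (κ * t) * (E 0 + I) ≤ Real.exp (κ * T) * ((1 + Ka) * (R + I)) := by
    calc Real.exp (κ * t) * (E 0 + I) ≤ Real.exp (κ * T) * (E 0 + I) :=
          mul_le_mul_of_nonneg_right hexpT hE0Inn
      _ ≤ Real.exp (κ * T) * ((1 + Ka) * (R + I)) :=
          mul_le_mul_of_nonneg_left hE0I (Real.exp_pos _).le
  calc (1 + lam) * ‖u t‖ ^ 2 + ‖u' t‖ ^ 2 ≤ c⁻¹ * E t := step1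
    _ ≤ c⁻¹ * (Real.exp (κ * t) * (E 0 + I)) := step2
    _ ≤ c⁻¹ * (Real.exp (κ * T) * ((1 + Ka) * (R + I))) :=
        mul_le_mul_of_nonneg_left step3 (by positivity)
    _ = c⁻¹ * (1 + Ka) * Real.exp (κ * T) * (R + I) := by ring
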